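/- Let p, q ∈ ℝⁿ_∞ with q ∈ S_i^ε(p) for some index i and sign ε. Then the union of geodesic segments from p to q satisfies D_{pq} = S_i^ε(p) ∩ S_i^{−ε}(q), where D_{pq} = {u ∈ ℝⁿ : d∞(p,u) + d∞(u,q) = d∞(p,q)}. -/
import Mathlib


/-- The sector `S_i^ε(p)` in `ℝⁿ_∞`: points `q` with `d∞(p,q) = ε(q_i − p_i)`. -/
def sector {n : ℕ} (p : Fin n → ℝ) (i : Fin n) (ε : ℝ) : Set (Fin n → ℝ) :=
  {q | dist p q = ε * (q i - p i)}

/-- The union of geodesic segments from `p` to `q` in `ℝⁿ_∞`: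
`D_{pq} = {u : d∞(p,u) + d∞(u,q) = d∞(p,q)}`. -/
def geodSegUnion {n : ℕ} (p q : Fin n → ℝ) : Set (Fin n → ℝ) :=
  {u | dist p u + dist u q = dist p q}

/-- If `q ∈ S_i^ε(p)` in `ℝⁿ_∞`, then `D_{pq} = S_i^ε(p) ∩ S_i^{−ε}(q)`. -/
theorem geodSegUnion_eq_sector_inter {n : ℕ} (p q : Fin n → ℝ) (i : Fin n) (ε : ℝ)
    (hε : ε = 1 ∨ ε = -1) (hq : q ∈ sector p i ε) :
    geodSegUnion p q = sector p i ε ∩ sector q i (-ε) := by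
  have key : ∀ a b : Fin n → ℝ, ε * (b i - a i) ≤ dist a b := by
    intro a b
    have hd := dist_le_pi_dist a b i
    rw [Real.dist_eq] at hd
    have h1 := le_abs_self (a i - b i)
    have h2 := neg_abs_le (a i - b i)
    rcases hε with h | h <;> subst h <;> linarith
  ext u
  simp only [geodSegUnion, sector, Set.mem_setOf_eq, Set.mem_inter_iff] at *
  constructor
  · intro h
    have h1 := key p u
    have h2 := key u q
    have hcomm : dist u q = dist q u := dist_comm u q
    constructor
    · linarith
    · linarith
  · rintro ⟨h1, h2⟩
    have hcomm : dist u q = dist q u := dist_comm u q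
    linarith
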